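/- Let g : ℝ → ℝ be a 2π-periodic positive function in H²(𝕋) and let β ∈ (1,2]. Then there exists a constant C_β > 0 depending only on β such that ∫_𝕋 |g'(μ)|⁴ / g(μ)^β dμ ≤ C_β ‖g‖_{H²}^{4-β}. -/

import Mathlib

open Set Filter Topology MeasureTheory

set_option maxHeartbeats 1000000 in
/-- weighted estimate
`∫ |g'|⁴ / g^β ≤ C_β ‖g‖_{H²}^{4-β}` for positive `2π`-periodic `g ∈ H²`
(Lemma 7 of Gancedo–Patel). -/
theorem stmt10 (β : ℝ) (hβ : β ∈ Set.Ioc (1:ℝ) 2) :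
    ∃ C > (0:ℝ), ∀ g g' g'' : ℝ → ℝ,
      Function.Periodic g (2 * Real.pi) →
      (∀ μ, 0 < g μ) →
      (∀ μ, HasDerivAt g (g' μ) μ) →
      (∀ μ, HasDerivAt g' (g'' μ) μ) →
      IntervalIntegrable (fun μ => g'' μ ^ 2) volume 0 (2 * Real.pi) →
      (∫ μ in (0:ℝ)..(2 * Real.pi), |g' μ| ^ 4 / g μ ^ β) ≤
        C * Real.sqrt (∫ μ in (0:ℝ)..(2 * Real.pi),
            g μ ^ 2 + g' μ ^ 2 + g'' μ ^ 2) ^ (4 - β) := by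
  obtain ⟨hβ1, hβ2⟩ := hβ
  have hβ1' : (0:ℝ) < β - 1 := by linarith
  have hβne : β - 1 ≠ 0 := ne_of_gt hβ1'
  have hβne' : (1:ℝ) - β ≠ 0 := by intro h; apply hβne; linarith
  have h2β : (0:ℝ) ≤ 2 - β := by linarith
  refine ⟨18 / (β - 1) ^ 2, by positivity, ?_⟩
  intro g g' g'' hper hpos hg hg' hInt2
  have hπ : (0:ℝ) < 2 * Real.pi := by positivity
  set b : ℝ := 2 * Real.pi with hbdef
  -- regularity
  have hgc : Continuous g :=
    Differentiable.continuous (fun x => (hg x).differentiableAt)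
  have hg'c : Continuous g' :=
    Differentiable.continuous (fun x => (hg' x).differentiableAt)
  have hrp : ∀ p : ℝ, Continuous fun x => g x ^ p := fun p =>
    hgc.rpow_const (fun x => Or.inl (hpos x).ne')
  -- measurability and integrability of g''
  have hg''m : Measurable g'' := by
    have : g'' = deriv g' := funext fun x => ((hg' x).deriv).symm
    rw [this]; exact measurable_deriv g'
  have hIg'' : IntervalIntegrable g'' volume 0 b := by
    have hbound : IntervalIntegrable (fun x => (1 + g'' x ^ 2) / 2) volume 0 b :=
      (intervalIntegrable_const.add hInt2).div_const 2
    refine hbound.mono_fun' hg''m.aestronglyMeasurable.restrict ?_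
    filter_upwards with x
    simp only [Real.norm_eq_abs]
    nlinarith [sq_nonneg (|g'' x| - 1), abs_nonneg (g'' x), sq_abs (g'' x)]
  -- min and max of g on [0, b]
  obtain ⟨xM, hxM, hMmax⟩ :=
    isCompact_Icc.exists_isMaxOn (nonempty_Icc.2 hπ.le) hgc.continuousOn
  obtain ⟨xm, hxm, hmmin⟩ :=
    isCompact_Icc.exists_isMinOn (nonempty_Icc.2 hπ.le) hgc.continuousOn
  set M : ℝ := g xM with hMdef
  have hMpos : 0 < M := hpos xM
  have hMup : ∀ x ∈ Icc (0:ℝ) b, g x ≤ M := fun x hx => hMmax hx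
  have hmlo : ∀ x ∈ Icc (0:ℝ) b, g xm ≤ g x := fun x hx => hmmin hx
  -- the H² energy
  set S : ℝ := ∫ μ in (0:ℝ)..b, g μ ^ 2 + g' μ ^ 2 + g'' μ ^ 2 with hSdef
  set N : ℝ := Real.sqrt S with hNdef
  have hIsq : IntervalIntegrable (fun x => g x ^ 2) volume 0 b :=
    (hgc.pow 2).intervalIntegrable 0 b
  have hIsq' : IntervalIntegrable (fun x => g' x ^ 2) volume 0 b :=
    (hg'c.pow 2).intervalIntegrable 0 b
  have hIS : IntervalIntegrable (fun x => g x ^ 2 + g' x ^ 2 + g'' x ^ 2) volume 0 b :=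
    (hIsq.add hIsq').add hInt2
  have hS0 : 0 ≤ S := by
    rw [hSdef]
    apply intervalIntegral.integral_nonneg hπ.le
    intro x _; positivity
  have hNsq : N ^ 2 = S := Real.sq_sqrt hS0
  have hN0 : 0 ≤ N := Real.sqrt_nonneg _
  have hSpos : 0 < S := by
    have h1 : 0 < ∫ μ in (0:ℝ)..b, g μ ^ 2 :=
      intervalIntegral.intervalIntegral_pos_of_pos_on hIsq (fun x _ => pow_pos (hpos x) 2) hπ
    have h2 : (∫ μ in (0:ℝ)..b, g μ ^ 2) ≤ S := by
      rw [hSdef]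
      apply intervalIntegral.integral_mono_on hπ.le hIsq hIS
      intro x _; nlinarith [sq_nonneg (g' x), sq_nonneg (g'' x)]
    linarith
  have hNpos : 0 < N := Real.sqrt_pos.2 hSpos
  -- ∫ g''² ≤ S
  have hg''S : (∫ μ in (0:ℝ)..b, g'' μ ^ 2) ≤ S := by
    rw [hSdef]
    apply intervalIntegral.integral_mono_on hπ.le hInt2 hIS
    intro x _; nlinarith [sq_nonneg (g x), sq_nonneg (g' x)]
  -- m² ≤ S
  have hmS : g xm ^ 2 ≤ S := by
    have h1 : (∫ _ in (0:ℝ)..b, g xm ^ 2) ≤ ∫ μ in (0:ℝ)..b, g μ ^ 2 := by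
      apply intervalIntegral.integral_mono_on hπ.le intervalIntegrable_const hIsq
      intro x hx
      have := hmlo x hx
      nlinarith [hpos xm]
    rw [intervalIntegral.integral_const, smul_eq_mul, sub_zero] at h1
    have h2 : (∫ μ in (0:ℝ)..b, g μ ^ 2) ≤ S := by
      rw [hSdef]
      apply intervalIntegral.integral_mono_on hπ.le hIsq hIS
      intro x _; nlinarith [sq_nonneg (g' x), sq_nonneg (g'' x)]
    have hb1 : (1:ℝ) ≤ b := by
      have := Real.pi_gt_three; rw [hbdef]; linarith
    nlinarith [hpos xm]
  -- M² - m² ≤ S via FTC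
  have hIgg' : Continuous fun x => 2 * g x * g' x := by continuity
  have hgg'sq : ∀ x, HasDerivAt (fun y => g y ^ 2) (2 * g x * g' x) x := by
    intro x
    have := (hg x).pow 2
    norm_num at this
    exact this
  have helper : ∀ c d : ℝ, c ∈ Icc (0:ℝ) b → d ∈ Icc (0:ℝ) b → c ≤ d →
      |g d ^ 2 - g c ^ 2| ≤ S := by
    intro c d hc hd hcd
    have hftc : ∫ x in c..d, 2 * g x * g' x = g d ^ 2 - g c ^ 2 := by
      apply intervalIntegral.integral_eq_sub_of_hasDerivAt
      · exact fun x _ => hgg'sq x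
      · exact hIgg'.intervalIntegrable c d
    rw [← hftc]
    calc |∫ x in c..d, 2 * g x * g' x| ≤ ∫ x in c..d, |2 * g x * g' x| :=
          intervalIntegral.abs_integral_le_integral_abs hcd
      _ ≤ ∫ x in c..d, g x ^ 2 + g' x ^ 2 := by
          apply intervalIntegral.integral_mono_on hcd
            (hIgg'.abs.intervalIntegrable c d)
            (((hgc.pow 2).add (hg'c.pow 2)).intervalIntegrable c d)
          intro x _
          simp only [Pi.add_apply, Pi.pow_apply]
          rw [abs_le]
          constructor
          · nlinarith [sq_nonneg (g x + g' x)]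
          · nlinarith [sq_nonneg (g x - g' x)]
      _ ≤ ∫ x in (0:ℝ)..b, g x ^ 2 + g' x ^ 2 := by
          apply intervalIntegral.integral_mono_interval hc.1 hcd hd.2
          · filter_upwards with x; positivity
          · exact ((hgc.pow 2).add (hg'c.pow 2)).intervalIntegrable 0 b
      _ ≤ S := by
          rw [hSdef]
          apply intervalIntegral.integral_mono_on hπ.le
            (((hgc.pow 2).add (hg'c.pow 2)).intervalIntegrable 0 b) hIS
          intro x _; simp only [Pi.add_apply, Pi.pow_apply]; nlinarith [sq_nonneg (g'' x)]
  have hM2 : M ^ 2 ≤ 4 * S := by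
    have hMm : g xm ≤ M := hMup xm hxm
    have key : M ^ 2 - g xm ^ 2 ≤ S := by
      rcases le_total xm xM with h | h
      · calc M ^ 2 - g xm ^ 2 ≤ |g xM ^ 2 - g xm ^ 2| := le_abs_self _
          _ ≤ S := helper xm xM hxm hxM h
      · calc M ^ 2 - g xm ^ 2 = -(g xm ^ 2 - g xM ^ 2) := by ring
          _ ≤ |g xm ^ 2 - g xM ^ 2| := neg_le_abs _
          _ ≤ S := helper xM xm hxM hxm h
    linarith [hmS]
  have hM2N : M ≤ 2 * N := by
    have h1 : M ^ 2 ≤ (2 * N) ^ 2 := by nlinarith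
    have h2 := Real.sqrt_le_sqrt h1
    rwa [Real.sqrt_sq hMpos.le, Real.sqrt_sq (by positivity)] at h2
  -- periodicity of g at endpoints
  have hgper : g b = g 0 := by
    have := hper 0; rw [zero_add] at this; exact this
  have hg'per : g' b = g' 0 := by
    have hinner : HasDerivAt (fun x : ℝ => x - b) 1 b := (hasDerivAt_id b).sub_const b
    have hcomp : HasDerivAt (g ∘ fun x : ℝ => x - b) (g' (b - b) * 1) b :=
      HasDerivAt.comp (h₂ := g) (h := fun x : ℝ => x - b) b (hg (b - b)) hinner
    have hfun : (g ∘ fun x : ℝ => x - b) = g := funext fun x => hper.sub_eq x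
    rw [hfun, sub_self, mul_one] at hcomp
    exact (hcomp.unique (hg b)).symm
  -- integration by parts
  set I : ℝ := ∫ x in (0:ℝ)..b, g' x ^ 4 * g x ^ (-β) with hIdef
  set J : ℝ := ∫ x in (0:ℝ)..b, g' x ^ 2 * g'' x * g x ^ (1 - β) with hJdef
  set K : ℝ := ∫ x in (0:ℝ)..b, g'' x ^ 2 * g x ^ (2 - β) with hKdef
  have hu : ∀ x, HasDerivAt (fun y => g' y ^ 3) (3 * g' x ^ 2 * g'' x) x := by
    intro x
    have := (hg' x).pow 3
    norm_num at this
    exact this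
  have hv : ∀ x, HasDerivAt (fun y => g y ^ (1 - β) / (1 - β)) (g x ^ (-β) * g' x) x := by
    intro x
    have h1 := ((hg x).rpow_const (p := 1 - β) (Or.inl (hpos x).ne')).div_const (1 - β)
    have he : (1 - β - 1) = -β := by ring
    rw [he] at h1
    refine h1.congr_deriv ?_
    rw [div_eq_iff hβne']
    ring
  have hu'int : IntervalIntegrable (fun x => 3 * g' x ^ 2 * g'' x) volume 0 b := by
    have h1 : IntervalIntegrable (fun x => (3 * g' x ^ 2) * g'' x) volume 0 b :=
      hIg''.continuousOn_mul (by fun_prop)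
    simpa [mul_assoc] using h1
  have hv'int : IntervalIntegrable (fun x => g x ^ (-β) * g' x) volume 0 b :=
    ((hrp (-β)).mul hg'c).intervalIntegrable 0 b
  have hIBP : (∫ x in (0:ℝ)..b, g' x ^ 3 * (g x ^ (-β) * g' x)) =
      g' b ^ 3 * (g b ^ (1 - β) / (1 - β)) - g' 0 ^ 3 * (g 0 ^ (1 - β) / (1 - β)) -
        ∫ x in (0:ℝ)..b, (3 * g' x ^ 2 * g'' x) * (g x ^ (1 - β) / (1 - β)) :=
    intervalIntegral.integral_mul_deriv_eq_deriv_mul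
      (fun x _ => hu x) (fun x _ => hv x) hu'int hv'int
  rw [hgper, hg'per] at hIBP
  have hIeq : I = (3 / (β - 1)) * J := by
    have h1 : I = ∫ x in (0:ℝ)..b, g' x ^ 3 * (g x ^ (-β) * g' x) := by
      rw [hIdef]
      apply intervalIntegral.integral_congr
      intro x _
      ring
    rw [h1, hIBP]
    have h2 : g' 0 ^ 3 * (g 0 ^ (1 - β) / (1 - β)) - g' 0 ^ 3 * (g 0 ^ (1 - β) / (1 - β)) = 0 := by
      ring
    rw [h2, zero_sub]
    rw [hJdef, ← intervalIntegral.integral_neg, ← intervalIntegral.integral_const_mul]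
    apply intervalIntegral.integral_congr
    intro x _
    field_simp
    ring
  -- pointwise Young inequality
  set ε : ℝ := (β - 1) / 3 with hεdef
  have hε : 0 < ε := by rw [hεdef]; linarith
  have hyoung : ∀ s t : ℝ, 0 ≤ s → 0 ≤ t →
      s * t ≤ ε / 2 * s ^ 2 + 1 / (2 * ε) * t ^ 2 := by
    intro s t _ _
    have hkey : ε / 2 * s ^ 2 + 1 / (2 * ε) * t ^ 2 - s * t = (ε * s - t) ^ 2 / (2 * ε) := by
      field_simp
      ring
    nlinarith [div_nonneg (sq_nonneg (ε * s - t)) (by linarith : (0:ℝ) ≤ 2 * ε)]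
  have hptwise : ∀ x, g' x ^ 2 * g'' x * g x ^ (1 - β) ≤
      ε / 2 * (g' x ^ 4 * g x ^ (-β)) + 1 / (2 * ε) * (g'' x ^ 2 * g x ^ (2 - β)) := by
    intro x
    have hp := hpos x
    have e1 : g x ^ (-β / 2) * g x ^ (1 - β / 2) = g x ^ (1 - β) := by
      rw [← Real.rpow_add hp]; ring_nf
    have e2 : g x ^ (-β / 2) * g x ^ (-β / 2) = g x ^ (-β) := by
      rw [← Real.rpow_add hp]; ring_nf
    have e3 : g x ^ (1 - β / 2) * g x ^ (1 - β / 2) = g x ^ (2 - β) := by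
      rw [← Real.rpow_add hp]; ring_nf
    have hs0 : (0:ℝ) ≤ g' x ^ 2 * g x ^ (-β / 2) := by positivity
    have ht0 : (0:ℝ) ≤ |g'' x| * g x ^ (1 - β / 2) := by positivity
    have hy := hyoung _ _ hs0 ht0
    have hleft : g' x ^ 2 * g'' x * g x ^ (1 - β) ≤
        (g' x ^ 2 * g x ^ (-β / 2)) * (|g'' x| * g x ^ (1 - β / 2)) := by
      have h1 : (g' x ^ 2 * g x ^ (-β / 2)) * (|g'' x| * g x ^ (1 - β / 2)) =
          g' x ^ 2 * |g'' x| * g x ^ (1 - β) := by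
        rw [← e1]; ring
      rw [h1]
      have h2 : g'' x ≤ |g'' x| := le_abs_self _
      have h3 : (0:ℝ) ≤ g' x ^ 2 * g x ^ (1 - β) := by positivity
      nlinarith [Real.rpow_pos_of_pos hp (1 - β)]
    have hright : ε / 2 * ((g' x ^ 2 * g x ^ (-β / 2))) ^ 2 +
        1 / (2 * ε) * ((|g'' x| * g x ^ (1 - β / 2))) ^ 2 =
        ε / 2 * (g' x ^ 4 * g x ^ (-β)) + 1 / (2 * ε) * (g'' x ^ 2 * g x ^ (2 - β)) := by
      have habs : |g'' x| ^ 2 = g'' x ^ 2 := sq_abs _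
      rw [← e2, ← e3, ← habs]
      ring
    calc g' x ^ 2 * g'' x * g x ^ (1 - β) ≤
        (g' x ^ 2 * g x ^ (-β / 2)) * (|g'' x| * g x ^ (1 - β / 2)) := hleft
      _ ≤ ε / 2 * ((g' x ^ 2 * g x ^ (-β / 2))) ^ 2 +
          1 / (2 * ε) * ((|g'' x| * g x ^ (1 - β / 2))) ^ 2 := hy
      _ = _ := hright
  -- integrate the pointwise estimate
  have hJint : IntervalIntegrable (fun x => g' x ^ 2 * g'' x * g x ^ (1 - β)) volume 0 b := by
    have h1 : IntervalIntegrable (fun x => (g' x ^ 2) * g'' x) volume 0 b :=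
      hIg''.continuousOn_mul (by fun_prop)
    exact h1.mul_continuousOn ((hrp (1 - β)).continuousOn)
  have hAint : IntervalIntegrable (fun x => g' x ^ 4 * g x ^ (-β)) volume 0 b :=
    ((hg'c.pow 4).mul (hrp (-β))).intervalIntegrable 0 b
  have hBint : IntervalIntegrable (fun x => g'' x ^ 2 * g x ^ (2 - β)) volume 0 b :=
    hInt2.mul_continuousOn ((hrp (2 - β)).continuousOn)
  have hJle : J ≤ ε / 2 * I + 1 / (2 * ε) * K := by
    have h1 : J ≤ ∫ x in (0:ℝ)..b,
        (ε / 2 * (g' x ^ 4 * g x ^ (-β)) + 1 / (2 * ε) * (g'' x ^ 2 * g x ^ (2 - β))) := by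
      rw [hJdef]
      apply intervalIntegral.integral_mono_on hπ.le hJint
        ((hAint.const_mul _).add (hBint.const_mul _))
      intro x _
      exact hptwise x
    rw [intervalIntegral.integral_add (hAint.const_mul _) (hBint.const_mul _),
      intervalIntegral.integral_const_mul, intervalIntegral.integral_const_mul] at h1
    exact h1
  -- close the loop: I ≤ (3/(β-1)) (ε/2 I + 1/(2ε) K)
  have hcoef : (0:ℝ) ≤ 3 / (β - 1) := by positivity
  have hIle : I ≤ 1 / 2 * I + 9 / (2 * (β - 1) ^ 2) * K := by
    have h1 : I ≤ 3 / (β - 1) * (ε / 2 * I + 1 / (2 * ε) * K) := by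
      calc I = 3 / (β - 1) * J := hIeq
        _ ≤ 3 / (β - 1) * (ε / 2 * I + 1 / (2 * ε) * K) :=
            mul_le_mul_of_nonneg_left hJle hcoef
    have h2 : 3 / (β - 1) * (ε / 2 * I + 1 / (2 * ε) * K) =
        1 / 2 * I + 9 / (2 * (β - 1) ^ 2) * K := by
      rw [hεdef]
      field_simp
      ring
    linarith [h2 ▸ h1]
  have hIK : I ≤ 9 / (β - 1) ^ 2 * K := by
    have : 9 / (2 * (β - 1) ^ 2) * K * 2 = 9 / (β - 1) ^ 2 * K := by
      field_simp
    linarith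
  -- bound K
  have hKb : K ≤ M ^ (2 - β) * S := by
    have h1 : K ≤ ∫ x in (0:ℝ)..b, g'' x ^ 2 * M ^ (2 - β) := by
      rw [hKdef]
      apply intervalIntegral.integral_mono_on hπ.le hBint (hInt2.mul_const _)
      intro x hx
      have hgM : g x ^ (2 - β) ≤ M ^ (2 - β) :=
        Real.rpow_le_rpow (hpos x).le (hMup x hx) h2β
      nlinarith [sq_nonneg (g'' x), Real.rpow_pos_of_pos (hpos x) (2 - β)]
    have h2 : (∫ x in (0:ℝ)..b, g'' x ^ 2 * M ^ (2 - β)) =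
        M ^ (2 - β) * ∫ x in (0:ℝ)..b, g'' x ^ 2 := by
      rw [← intervalIntegral.integral_const_mul]
      apply intervalIntegral.integral_congr
      intro x _; ring
    rw [h2] at h1
    calc K ≤ M ^ (2 - β) * ∫ x in (0:ℝ)..b, g'' x ^ 2 := h1
      _ ≤ M ^ (2 - β) * S := by
          apply mul_le_mul_of_nonneg_left hg''S
          positivity
  -- bound M^(2-β) ≤ 2 * N^(2-β)
  have hMrp : M ^ (2 - β) ≤ 2 * N ^ (2 - β) := by
    calc M ^ (2 - β) ≤ (2 * N) ^ (2 - β) :=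
          Real.rpow_le_rpow hMpos.le hM2N h2β
      _ = 2 ^ (2 - β) * N ^ (2 - β) := Real.mul_rpow (by norm_num) hN0
      _ ≤ 2 * N ^ (2 - β) := by
          apply mul_le_mul_of_nonneg_right _ (Real.rpow_nonneg hN0 _)
          calc (2:ℝ) ^ (2 - β) ≤ 2 ^ (1:ℝ) :=
                Real.rpow_le_rpow_of_exponent_le (by norm_num) (by linarith)
            _ = 2 := Real.rpow_one 2
  -- assemble
  have hfinal : I ≤ 18 / (β - 1) ^ 2 * N ^ (4 - β) := by
    have hNN : N ^ (2 - β) * S = N ^ (4 - β) := by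
      have : S = N ^ ((2:ℕ):ℝ) := by
        rw [Real.rpow_natCast, hNsq]
      rw [this, ← Real.rpow_add hNpos]
      congr 1
      push_cast
      ring
    have hK0 : K ≤ 2 * N ^ (4 - β) := by
      calc K ≤ M ^ (2 - β) * S := hKb
        _ ≤ (2 * N ^ (2 - β)) * S := by
            apply mul_le_mul_of_nonneg_right hMrp hS0
        _ = 2 * N ^ (4 - β) := by rw [mul_assoc, hNN]
    calc I ≤ 9 / (β - 1) ^ 2 * K := hIK
      _ ≤ 9 / (β - 1) ^ 2 * (2 * N ^ (4 - β)) := by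
          apply mul_le_mul_of_nonneg_left hK0 (by positivity)
      _ = 18 / (β - 1) ^ 2 * N ^ (4 - β) := by ring
  -- rewrite the goal
  have hgoal : (∫ μ in (0:ℝ)..b, |g' μ| ^ 4 / g μ ^ β) = I := by
    rw [hIdef]
    apply intervalIntegral.integral_congr
    intro x _
    show |g' x| ^ 4 / g x ^ β = g' x ^ 4 * g x ^ (-β)
    have h1 : |g' x| ^ 4 = g' x ^ 4 := by
      rw [← abs_pow, abs_of_nonneg (by positivity)]
    rw [h1, Real.rpow_neg (hpos x).le, div_eq_mul_inv]
  rw [hgoal]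
  exact hfinal
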